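/- Let d ≥ 1 be a real number with d^ε ≥ 4, let u be a bad vertex with deg(u) ∈ [d, 2d), and let k be an even integer with 4 ≤ k ≤ d^ε. Then the probability that u has more than d^{2ε} sampled neighbors, i.e., Pr[|N(u) ∩ V_samp| > d^{2ε}], is at most 8·(2k²/d^ε)^{k/2}. -/

import Mathlib

open MeasureTheory ProbabilityTheory

private lemma two_term_binomial {x y : ℝ} (hx : 0 ≤ x) (hy : 0 ≤ y) (n : ℕ) :
    x ^ (n + 1) + ((n : ℝ) + 1) * y * x ^ n ≤ (x + y) ^ (n + 1) := by
  induction n with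
  | zero => simp
  | succ m ih =>
    have hxm : 0 ≤ x ^ m := by positivity
    have h2 : (x + y) * (x ^ (m + 1) + ((m : ℝ) + 1) * y * x ^ m) ≤ (x + y) * (x + y) ^ (m + 1) :=
      mul_le_mul_of_nonneg_left ih (by positivity)
    have e2 : x ^ (m + 1 + 1) = x * x ^ (m + 1) := by ring
    have e3 : (x + y) ^ (m + 1 + 1) = (x + y) * (x + y) ^ (m + 1) := by ring
    have e1 : x ^ (m + 1) = x * x ^ m := by ring
    rw [e2, e3]
    rw [e1] at h2 ⊢
    push_cast
    nlinarith [mul_nonneg (mul_nonneg hy hy) hxm, mul_nonneg hy hxm,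
      mul_nonneg (mul_nonneg hx hy) hxm]

private lemma factorial_mul_esymm_le {α : Type*} [DecidableEq α] (p : α → ℝ)
    (hp : ∀ w, 0 ≤ p w) (S : Finset α) :
    ∀ k : ℕ, (k.factorial : ℝ) * ∑ A ∈ S.powersetCard k, ∏ w ∈ A, p w
      ≤ (∑ w ∈ S, p w) ^ k := by
  induction S using Finset.induction_on with
  | empty =>
    intro k
    cases k with
    | zero => simp
    | succ n =>
      have : (∅ : Finset α).powersetCard (n + 1) = ∅ :=
        Finset.powersetCard_eq_empty.mpr (by simp)
      simp [this]
  | @insert a S ha ih =>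
    intro k
    cases k with
    | zero => simp
    | succ n =>
      have hs0 : 0 ≤ ∑ w ∈ S, p w := Finset.sum_nonneg fun w _ => hp w
      have hdisj : Disjoint (S.powersetCard (n + 1)) ((S.powersetCard n).image (insert a)) := by
        rw [Finset.disjoint_left]
        intro A hA hA'
        obtain ⟨B, hB, rfl⟩ := Finset.mem_image.mp hA'
        exact ha ((Finset.mem_powersetCard.mp hA).1 (Finset.mem_insert_self a B))
      have hsum : ∑ A ∈ (insert a S).powersetCard (n + 1), ∏ w ∈ A, p w
          = (∑ A ∈ S.powersetCard (n + 1), ∏ w ∈ A, p w)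
            + p a * ∑ B ∈ S.powersetCard n, ∏ w ∈ B, p w := by
        rw [Finset.powersetCard_succ_insert ha, Finset.sum_union hdisj, Finset.sum_image ?hinj]
        case hinj =>
          intro B hB B' hB' h
          have haB : a ∉ B := fun hc => ha ((Finset.mem_powersetCard.mp hB).1 hc)
          have haB' : a ∉ B' := fun hc => ha ((Finset.mem_powersetCard.mp hB').1 hc)
          rw [← Finset.erase_insert haB, ← Finset.erase_insert haB', h]
        rw [Finset.mul_sum]
        congr 1
        refine Finset.sum_congr rfl fun B hB => ?_
        have haB : a ∉ B := fun hc => ha ((Finset.mem_powersetCard.mp hB).1 hc)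
        rw [Finset.prod_insert haB]
      rw [hsum, Finset.sum_insert ha]
      have ih1 := ih (n + 1)
      have ih2 := ih n
      have hf0 : 0 ≤ ∑ B ∈ S.powersetCard n, ∏ w ∈ B, p w :=
        Finset.sum_nonneg fun B _ => Finset.prod_nonneg fun w _ => hp w
      have htb := two_term_binomial hs0 (hp a) n
      calc ((n + 1).factorial : ℝ)
            * ((∑ A ∈ S.powersetCard (n + 1), ∏ w ∈ A, p w)
              + p a * ∑ B ∈ S.powersetCard n, ∏ w ∈ B, p w)
          = ((n + 1).factorial : ℝ) * (∑ A ∈ S.powersetCard (n + 1), ∏ w ∈ A, p w)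
            + ((n : ℝ) + 1) * p a * ((n.factorial : ℝ)
              * ∑ B ∈ S.powersetCard n, ∏ w ∈ B, p w) := by
            rw [Nat.factorial_succ]; push_cast; ring
        _ ≤ (∑ w ∈ S, p w) ^ (n + 1) + ((n : ℝ) + 1) * p a * (∑ w ∈ S, p w) ^ n := by
            refine add_le_add ih1 (mul_le_mul_of_nonneg_left ih2 ?_)
            have := hp a; positivity
        _ ≤ (∑ w ∈ S, p w + p a) ^ (n + 1) := by
            nlinarith [htb]
        _ = (p a + ∑ w ∈ S, p w) ^ (n + 1) := by rw [add_comm]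


/-- A finite family of random variables is `k`-wise independent if every subfamily of at most
`k` of them is mutually independent. -/
def KWiseIndepFun {Ω ι β : Type*} [MeasurableSpace Ω] [MeasurableSpace β]
    (k : ℕ) (X : ι → Ω → β) (P : Measure Ω) : Prop :=
  ∀ S : Finset ι, S.card ≤ k →
    iIndepFun (fun i : S => X i) P

set_option maxHeartbeats 1000000 in
/-- Let `d ≥ 1` be a real number with `d^ε ≥ 4` (where `ε = 1/40`), let `u` be a bad vertex
(that is, `∑_{w ∈ N(u)} deg(w)^{-1/2} < deg(u)^ε`) with `deg(u) ∈ [d, 2d)`, and let `k` be an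
even integer with `4 ≤ k ≤ d^ε`. Each vertex `w` with `deg(w) ≥ 1` is sampled with probability
`deg(w)^{-1/2}`, with `k`-wise independent sampling indicators. Then the probability that `u`
has more than `d^{2ε}` sampled neighbors is at most `8·(2k²/d^ε)^(k/2)`. -/
theorem bad_vertex_few_sampled_neighbors {V Ω : Type*} [Fintype V] [DecidableEq V]
    [MeasurableSpace Ω]
    (G : SimpleGraph V) [DecidableRel G.Adj]
    (P : Measure Ω) [IsProbabilityMeasure P]
    (Vsamp : Ω → Finset V)
    (hmeas : ∀ w : V, MeasurableSet {ω | w ∈ Vsamp ω})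
    (hprob : ∀ w : V, 1 ≤ G.degree w →
      (P {ω | w ∈ Vsamp ω}).toReal = (G.degree w : ℝ) ^ (-(1 : ℝ) / 2))
    (k : ℕ) (hk4 : 4 ≤ k) (hkeven : Even k)
    (hindep : KWiseIndepFun k (fun (w : V) (ω : Ω) => if w ∈ Vsamp ω then (1 : ℝ) else 0) P)
    (d : ℝ) (hd1 : 1 ≤ d) (hd4 : (4 : ℝ) ≤ d ^ ((1 : ℝ) / 40))
    (u : V) (hdegl : d ≤ (G.degree u : ℝ)) (hdegr : (G.degree u : ℝ) < 2 * d)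
    (hbad : ∑ w ∈ G.neighborFinset u, (G.degree w : ℝ) ^ (-(1 : ℝ) / 2)
      < (G.degree u : ℝ) ^ ((1 : ℝ) / 40))
    (hk : (k : ℝ) ≤ d ^ ((1 : ℝ) / 40)) :
    (P {ω | d ^ ((1 : ℝ) / 20)
        < (((G.neighborFinset u).filter (fun w => w ∈ Vsamp ω)).card : ℝ)}).toReal
      ≤ 8 * (2 * (k : ℝ) ^ 2 / d ^ ((1 : ℝ) / 40)) ^ ((k : ℝ) / 2) := by
  classical
  have hdpos : (0 : ℝ) < d := lt_of_lt_of_le one_pos hd1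
  set X : ℝ := d ^ ((1 : ℝ) / 40) with hXdef
  have hXpos : 0 < X := Real.rpow_pos_of_pos hdpos _
  have hT : d ^ ((1 : ℝ) / 20) = X * X := by
    rw [hXdef, ← Real.rpow_add hdpos]; norm_num
  set S : Finset V := G.neighborFinset u with hSdef
  set Bad : Set Ω :=
    {ω | d ^ ((1 : ℝ) / 20) < ((S.filter (fun w => w ∈ Vsamp ω)).card : ℝ)} with hBaddef
  set n : ℕ := ⌊d ^ ((1 : ℝ) / 20)⌋₊ + 1 with hndef
  -- degrees of neighbors are positive
  have hdeg1 : ∀ w ∈ S, 1 ≤ G.degree w := by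
    intro w hw
    have hadj : G.Adj u w := by rwa [hSdef, SimpleGraph.mem_neighborFinset] at hw
    exact (G.degree_pos_iff_exists_adj w).mpr ⟨u, hadj.symm⟩
  have hp0 : ∀ w : V, (0 : ℝ) ≤ (G.degree w : ℝ) ^ (-(1 : ℝ) / 2) :=
    fun w => Real.rpow_nonneg (Nat.cast_nonneg _) _
  -- expectation of each product of indicators
  have hEA : ∀ A ∈ S.powersetCard k,
      (P {ω | ∀ w ∈ A, w ∈ Vsamp ω}).toReal = ∏ w ∈ A, (G.degree w : ℝ) ^ (-(1 : ℝ) / 2) := by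
    intro A hA
    obtain ⟨hAS, hAcard⟩ := Finset.mem_powersetCard.mp hA
    have hind := hindep A (le_of_eq hAcard)
    have hpre : ∀ w : V,
        (fun ω => if w ∈ Vsamp ω then (1 : ℝ) else 0) ⁻¹' ({1} : Set ℝ)
          = {ω | w ∈ Vsamp ω} := by
      intro w; ext ω; by_cases h : w ∈ Vsamp ω <;> simp [h]
    have hmul := hind.measure_inter_preimage_eq_mul (Finset.univ : Finset ↥A)
      (sets := fun _ => ({1} : Set ℝ)) (fun i _ => measurableSet_singleton 1)
    simp only [hpre] at hmul
    have hset : (⋂ i ∈ (Finset.univ : Finset ↥A), {ω | (i : V) ∈ Vsamp ω})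
        = {ω | ∀ w ∈ A, w ∈ Vsamp ω} := by
      ext ω
      simp only [Set.mem_iInter, Finset.mem_univ, forall_true_left, Set.mem_setOf_eq,
        Subtype.forall]
    have hprod : ∏ i ∈ (Finset.univ : Finset ↥A), P {ω | (i : V) ∈ Vsamp ω}
        = ∏ w ∈ A, P {ω | w ∈ Vsamp ω} :=
      Finset.prod_coe_sort A (fun w => P {ω | w ∈ Vsamp ω})
    rw [hset, hprod] at hmul
    rw [hmul, ENNReal.toReal_prod]
    exact Finset.prod_congr rfl fun w hw => hprob w (hdeg1 w (hAS hw))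
  have hEAmeas : ∀ A : Finset V, MeasurableSet {ω | ∀ w ∈ A, w ∈ Vsamp ω} := by
    intro A
    have : {ω | ∀ w ∈ A, w ∈ Vsamp ω} = ⋂ w ∈ A, {ω | w ∈ Vsamp ω} := by
      ext ω; simp
    rw [this]
    exact A.measurableSet_biInter (fun w _ => hmeas w)
  have hBadmeas : MeasurableSet Bad := by
    have hg : Measurable (fun ω => ∑ w ∈ S, if w ∈ Vsamp ω then (1 : ℝ) else 0) :=
      Finset.measurable_sum _ (fun w _ => Measurable.ite (hmeas w) measurable_const
        measurable_const)
    have heq : Bad = (fun ω => ∑ w ∈ S, if w ∈ Vsamp ω then (1 : ℝ) else 0) ⁻¹'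
        Set.Ioi (d ^ ((1 : ℝ) / 20)) := by
      ext ω
      simp only [hBaddef, Set.mem_setOf_eq, Set.mem_preimage, Set.mem_Ioi]
      rw [Finset.card_filter]
      push_cast
      rfl
    rw [heq]
    exact hg measurableSet_Ioi
  -- Markov step
  have hmark : (P Bad).toReal * ((n.choose k : ℕ) : ℝ)
      ≤ ∑ A ∈ S.powersetCard k, ∏ w ∈ A, (G.degree w : ℝ) ^ (-(1 : ℝ) / 2) := by
    have hint1 : Integrable (Bad.indicator fun _ => ((n.choose k : ℕ) : ℝ)) P :=
      (integrable_const _).indicator hBadmeas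
    have hint2 : ∀ A ∈ S.powersetCard k,
        Integrable (fun ω => ({ω | ∀ w ∈ A, w ∈ Vsamp ω}).indicator (fun _ => (1 : ℝ)) ω) P :=
      fun A _ => (integrable_const _).indicator (hEAmeas A)
    have hint3 : Integrable (fun ω => ∑ A ∈ S.powersetCard k,
        ({ω | ∀ w ∈ A, w ∈ Vsamp ω}).indicator (fun _ => (1 : ℝ)) ω) P :=
      integrable_finset_sum _ hint2
    have hle : ∀ ω, Bad.indicator (fun _ => ((n.choose k : ℕ) : ℝ)) ω
        ≤ ∑ A ∈ S.powersetCard k,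
          ({ω | ∀ w ∈ A, w ∈ Vsamp ω}).indicator (fun _ => (1 : ℝ)) ω := by
      intro ω
      by_cases hω : ω ∈ Bad
      · rw [Set.indicator_of_mem hω]
        have hω' : d ^ ((1 : ℝ) / 20) < ((S.filter (fun w => w ∈ Vsamp ω)).card : ℝ) := hω
        have hnF : n ≤ (S.filter (fun w => w ∈ Vsamp ω)).card := by
          have h0 : (0 : ℝ) ≤ d ^ ((1 : ℝ) / 20) := Real.rpow_nonneg hdpos.le _
          have := (Nat.floor_lt h0).mpr hω'
          omega
        calc ((n.choose k : ℕ) : ℝ)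
            ≤ (((S.filter (fun w => w ∈ Vsamp ω)).card.choose k : ℕ) : ℝ) := by
              exact_mod_cast Nat.choose_le_choose k hnF
          _ = ∑ A ∈ (S.filter (fun w => w ∈ Vsamp ω)).powersetCard k, (1 : ℝ) := by
              rw [Finset.sum_const, Finset.card_powersetCard, nsmul_eq_mul, mul_one]
          _ = ∑ A ∈ (S.filter (fun w => w ∈ Vsamp ω)).powersetCard k,
              ({ω | ∀ w ∈ A, w ∈ Vsamp ω}).indicator (fun _ => (1 : ℝ)) ω := by
              refine Finset.sum_congr rfl fun A hA => ?_
              have hmem : ω ∈ {ω | ∀ w ∈ A, w ∈ Vsamp ω} := by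
                intro w hw
                exact (Finset.mem_filter.mp ((Finset.mem_powersetCard.mp hA).1 hw)).2
              rw [Set.indicator_of_mem hmem]
          _ ≤ ∑ A ∈ S.powersetCard k,
              ({ω | ∀ w ∈ A, w ∈ Vsamp ω}).indicator (fun _ => (1 : ℝ)) ω :=
              Finset.sum_le_sum_of_subset_of_nonneg
                (Finset.powersetCard_mono (Finset.filter_subset _ _))
                (fun A _ _ => Set.indicator_nonneg (fun _ _ => zero_le_one) ω)
      · rw [Set.indicator_of_notMem hω]
        exact Finset.sum_nonneg fun A _ => Set.indicator_nonneg (fun _ _ => zero_le_one) ω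
    have h1 := integral_mono hint1 hint3 hle
    rw [integral_indicator_const _ hBadmeas, integral_finset_sum _ hint2] at h1
    have h2 : ∑ A ∈ S.powersetCard k,
        ∫ ω, ({ω | ∀ w ∈ A, w ∈ Vsamp ω}).indicator (fun _ => (1 : ℝ)) ω ∂P
        = ∑ A ∈ S.powersetCard k, ∏ w ∈ A, (G.degree w : ℝ) ^ (-(1 : ℝ) / 2) := by
      refine Finset.sum_congr rfl fun A hA => ?_
      rw [integral_indicator_const _ (hEAmeas A), smul_eq_mul, mul_one]
      exact hEA A hA
    rw [h2, smul_eq_mul] at h1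
    exact h1
  -- numeric part
  have hPr0 : 0 ≤ (P Bad).toReal := ENNReal.toReal_nonneg
  have hesym := factorial_mul_esymm_le (fun w => (G.degree w : ℝ) ^ (-(1 : ℝ) / 2))
    hp0 S k
  have hkX : (k : ℝ) ≤ X := hk
  have hX4 : (4 : ℝ) ≤ X := hd4
  have hTn : X * X < (n : ℝ) := by
    rw [← hT, hndef]
    push_cast
    exact Nat.lt_floor_add_one _
  have hkn : k ≤ n := by
    have h1 : (k : ℝ) < (n : ℝ) := by nlinarith
    exact_mod_cast h1.le
  set M : ℕ := n + 1 - k with hMdef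
  have hMcast : (M : ℝ) = (n : ℝ) + 1 - (k : ℝ) := by
    rw [hMdef]
    push_cast [Nat.cast_sub (by omega : k ≤ n + 1)]
    ring
  have hMge : (3 / 4) * (X * X) ≤ (M : ℝ) := by
    rw [hMcast]; nlinarith
  have hMpos : (0 : ℝ) < (M : ℝ) := lt_of_lt_of_le (by positivity) hMge
  have hμ0 : (0 : ℝ) ≤ ∑ w ∈ S, (G.degree w : ℝ) ^ (-(1 : ℝ) / 2) :=
    Finset.sum_nonneg fun w _ => hp0 w
  have hμ2 : ∑ w ∈ S, (G.degree w : ℝ) ^ (-(1 : ℝ) / 2) ≤ 2 * X := by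
    have h1 : ((G.degree u : ℝ)) ^ ((1 : ℝ) / 40) ≤ (2 * d) ^ ((1 : ℝ) / 40) :=
      Real.rpow_le_rpow (by positivity) hdegr.le (by norm_num)
    have h2 : (2 * d) ^ ((1 : ℝ) / 40) = (2 : ℝ) ^ ((1 : ℝ) / 40) * X := by
      rw [hXdef]; exact Real.mul_rpow (by norm_num) hdpos.le
    have h3 : (2 : ℝ) ^ ((1 : ℝ) / 40) ≤ 2 := by
      have := Real.rpow_le_rpow_of_exponent_le (x := 2) one_le_two
        (by norm_num : (1 : ℝ) / 40 ≤ 1)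
      rwa [Real.rpow_one] at this
    have h4 := mul_le_mul_of_nonneg_right h3 hXpos.le
    linarith [hbad]
  have hkey : (P Bad).toReal * (M : ℝ) ^ k
      ≤ (∑ w ∈ S, (G.degree w : ℝ) ^ (-(1 : ℝ) / 2)) ^ k := by
    have hdesc : (M ^ k : ℕ) ≤ n.descFactorial k := Nat.pow_sub_le_descFactorial n k
    calc (P Bad).toReal * (M : ℝ) ^ k
        = (P Bad).toReal * ((M ^ k : ℕ) : ℝ) := by push_cast; ring
      _ ≤ (P Bad).toReal * ((n.descFactorial k : ℕ) : ℝ) :=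
          mul_le_mul_of_nonneg_left (by exact_mod_cast hdesc) hPr0
      _ = (k.factorial : ℝ) * ((P Bad).toReal * ((n.choose k : ℕ) : ℝ)) := by
          rw [Nat.descFactorial_eq_factorial_mul_choose]; push_cast; ring
      _ ≤ (k.factorial : ℝ)
          * ∑ A ∈ S.powersetCard k, ∏ w ∈ A, (G.degree w : ℝ) ^ (-(1 : ℝ) / 2) :=
          mul_le_mul_of_nonneg_left hmark (by positivity)
      _ ≤ (∑ w ∈ S, (G.degree w : ℝ) ^ (-(1 : ℝ) / 2)) ^ k := hesym
  have hbM : ∑ w ∈ S, (G.degree w : ℝ) ^ (-(1 : ℝ) / 2) ≤ (8 / 3 / X) * (M : ℝ) := by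
    have h1 : (8 / 3 / X) * ((3 / 4) * (X * X)) = 2 * X := by field_simp; ring
    calc ∑ w ∈ S, (G.degree w : ℝ) ^ (-(1 : ℝ) / 2) ≤ 2 * X := hμ2
      _ = (8 / 3 / X) * ((3 / 4) * (X * X)) := h1.symm
      _ ≤ (8 / 3 / X) * (M : ℝ) := mul_le_mul_of_nonneg_left hMge (by positivity)
  have hPb : (P Bad).toReal ≤ (8 / 3 / X) ^ k := by
    have h1 : (∑ w ∈ S, (G.degree w : ℝ) ^ (-(1 : ℝ) / 2)) ^ k
        ≤ ((8 / 3 / X) * (M : ℝ)) ^ k := pow_le_pow_left₀ hμ0 hbM k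
    rw [mul_pow] at h1
    have h2 := hkey.trans h1
    have hMk : (0 : ℝ) < (M : ℝ) ^ k := by positivity
    exact le_of_mul_le_mul_right (by linarith) hMk
  obtain ⟨m, hm⟩ := hkeven
  have hcast : ((k : ℝ) / 2) = (m : ℝ) := by
    rw [hm]; push_cast; ring
  have hk4' : (32 : ℝ) ≤ 2 * (k : ℝ) ^ 2 := by
    have : (4 : ℝ) ≤ (k : ℝ) := by exact_mod_cast hk4
    nlinarith
  have hb2 : (8 / 3 / X) ^ 2 ≤ 2 * (k : ℝ) ^ 2 / X := by
    rw [div_pow, div_le_div_iff₀ (by positivity) hXpos]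
    nlinarith
  calc (P Bad).toReal ≤ (8 / 3 / X) ^ k := hPb
    _ = ((8 / 3 / X) ^ 2) ^ m := by rw [hm, ← two_mul, pow_mul]
    _ ≤ (2 * (k : ℝ) ^ 2 / X) ^ m := pow_le_pow_left₀ (by positivity) hb2 m
    _ ≤ 8 * (2 * (k : ℝ) ^ 2 / X) ^ m :=
        le_mul_of_one_le_left (by positivity) (by norm_num)
    _ = 8 * (2 * (k : ℝ) ^ 2 / X) ^ ((k : ℝ) / 2) := by
        rw [hcast, Real.rpow_natCast]
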